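/- Let n ≥ 1 and let Σ ⊆ ℝⁿ be a nonempty open bounded connected set. Then the uniform distribution on Σ is stationary for the hit-and-run Markov chain: for every measurable set A ⊆ Σ, ∫_Σ P_u(A) du = vol(A), where the integral is with respect to n-dimensional Lebesgue measure. -/

import Mathlib

open MeasureTheory

/-- The uniform probability distribution on the unit sphere of `ℝⁿ`, realized as the
pushforward of the uniform distribution on the unit ball under radial normalization. -/
noncomputable def sphereUniform (n : ℕ) : Measure (EuclideanSpace ℝ (Fin n)) :=
  Measure.map (fun x : EuclideanSpace ℝ (Fin n) => ‖x‖⁻¹ • x)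
    ((volume (Metric.ball (0 : EuclideanSpace ℝ (Fin n)) 1))⁻¹ •
      volume.restrict (Metric.ball (0 : EuclideanSpace ℝ (Fin n)) 1))

/-- `I(u,θ)`: the connected component containing `0` of `{t : ℝ | u + t • θ ∈ S}`. -/
def chordInterval (n : ℕ) (S : Set (EuclideanSpace ℝ (Fin n)))
    (u θ : EuclideanSpace ℝ (Fin n)) : Set ℝ :=
  connectedComponentIn {t : ℝ | u + t • θ ∈ S} 0

/-- One step of the hit-and-run chain on `S` from `u`: draw a direction `θ` uniformly
from the unit sphere, then draw `t` uniformly from `I(u,θ)` and move to `u + t • θ`. -/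
noncomputable def hitAndRunStep (n : ℕ) (S : Set (EuclideanSpace ℝ (Fin n)))
    (u : EuclideanSpace ℝ (Fin n)) : Measure (EuclideanSpace ℝ (Fin n)) :=
  (sphereUniform n).bind fun θ =>
    Measure.map (fun t : ℝ => u + t • θ)
      ((volume (chordInterval n S u θ))⁻¹ • volume.restrict (chordInterval n S u θ))

section HitAndRunProof

variable {n : ℕ} {S : Set (EuclideanSpace ℝ (Fin n))}

lemma mem_chordInterval_iff {u θ : EuclideanSpace ℝ (Fin n)} {t : ℝ} :
    t ∈ chordInterval n S u θ ↔ ∀ s ∈ Set.uIcc (0:ℝ) t, u + s • θ ∈ S := by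
  rw [chordInterval]
  set U : Set ℝ := {t : ℝ | u + t • θ ∈ S} with hU
  constructor
  · intro ht
    have h0 : (0:ℝ) ∈ U := connectedComponentIn_nonempty_iff.mp ⟨t, ht⟩
    have hpc : IsPreconnected (connectedComponentIn U 0) := isPreconnected_connectedComponentIn
    have hoc := hpc.ordConnected
    intro s hs
    have : Set.uIcc (0:ℝ) t ⊆ connectedComponentIn U 0 :=
      hoc.uIcc_subset (mem_connectedComponentIn h0) ht
    exact (connectedComponentIn_subset U 0) (this hs)
  · intro h
    exact isPreconnected_uIcc.subset_connectedComponentIn Set.left_mem_uIcc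
      (fun s hs => h s hs) Set.right_mem_uIcc

/-- The set of triples `((u,θ),t)` such that `t` is in the chord interval. -/
def chordSet (n : ℕ) (S : Set (EuclideanSpace ℝ (Fin n))) :
    Set ((EuclideanSpace ℝ (Fin n) × EuclideanSpace ℝ (Fin n)) × ℝ) :=
  {p | ∀ s ∈ Set.uIcc (0:ℝ) p.2, p.1.1 + s • p.1.2 ∈ S}

lemma mem_chordSet_iff {u θ : EuclideanSpace ℝ (Fin n)} {t : ℝ} :
    ((u, θ), t) ∈ chordSet n S ↔ t ∈ chordInterval n S u θ := by
  rw [mem_chordInterval_iff]; rfl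

lemma isOpen_chordSet (hSopen : IsOpen S) : IsOpen (chordSet n S) := by
  rw [isOpen_iff_mem_nhds]
  rintro ⟨⟨u₀, θ₀⟩, t₀⟩ hp
  set W : Set ((EuclideanSpace ℝ (Fin n) × EuclideanSpace ℝ (Fin n)) × ℝ) :=
    {q | q.1.1 + q.2 • q.1.2 ∈ S} with hW
  have hWopen : IsOpen W := by
    have hc : Continuous fun q : (EuclideanSpace ℝ (Fin n) × EuclideanSpace ℝ (Fin n)) × ℝ =>
        q.1.1 + q.2 • q.1.2 := by fun_prop
    exact hSopen.preimage hc
  have hsub : ({((u₀, θ₀))} : Set (EuclideanSpace ℝ (Fin n) × EuclideanSpace ℝ (Fin n))) ×ˢ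
      Set.uIcc (0:ℝ) t₀ ⊆ W := by
    rintro ⟨x, s⟩ ⟨hx, hs⟩
    simp only [Set.mem_singleton_iff] at hx
    subst hx
    exact hp s hs
  obtain ⟨U, V, hUo, hVo, hxU, hKV, hUV⟩ :=
    generalized_tube_lemma isCompact_singleton isCompact_uIcc hWopen hsub
  obtain ⟨δ, hδ, hball⟩ := Metric.isOpen_iff.mp hVo t₀ (hKV Set.right_mem_uIcc)
  have : U ×ˢ Metric.ball t₀ δ ⊆ chordSet n S := by
    rintro ⟨x, t⟩ ⟨hxu, ht⟩ s hs
    have hsV : s ∈ V := by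
      rcases Set.uIcc_subset_uIcc_union_uIcc (b := t₀) hs with h | h
      · exact hKV h
      · apply hball
        rw [Metric.mem_ball, Real.dist_eq]
        rcases Set.mem_uIcc.mp h with ⟨h1, h2⟩ | ⟨h1, h2⟩ <;>
          rw [Metric.mem_ball, Real.dist_eq] at ht <;>
          cases abs_cases (t - t₀) <;> cases abs_cases (s - t₀) <;> linarith [ht]
    exact hUV (show (x, s) ∈ U ×ˢ V from ⟨hxu, hsV⟩)
  exact Filter.mem_of_superset
    (by exact (hUo.prod Metric.isOpen_ball).mem_nhds ⟨hxU rfl, Metric.mem_ball_self hδ⟩) this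

lemma chordInterval_eq_slice (u θ : EuclideanSpace ℝ (Fin n)) :
    chordInterval n S u θ = {t : ℝ | ((u, θ), t) ∈ chordSet n S} := by
  ext t; exact mem_chordSet_iff.symm

lemma measurableSet_chordInterval (hSopen : IsOpen S) (u θ : EuclideanSpace ℝ (Fin n)) :
    MeasurableSet (chordInterval n S u θ) := by
  rw [chordInterval_eq_slice]
  exact measurable_prodMk_left ((isOpen_chordSet hSopen).measurableSet)

/-- Generic: the volume of slices of a measurable set is measurable. -/
lemma measurable_slice_volume {α : Type*} [MeasurableSpace α]
    {C : Set (α × ℝ)} (hC : MeasurableSet C) :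
    Measurable fun x : α => volume {t : ℝ | (x, t) ∈ C} := by
  have h1 : ∀ x : α, volume {t : ℝ | (x, t) ∈ C}
      = ∫⁻ t : ℝ, C.indicator (fun _ => (1:ENNReal)) (x, t) ∂volume := by
    intro x
    rw [show {t : ℝ | (x, t) ∈ C} = Prod.mk x ⁻¹' C from rfl,
      ← lintegral_indicator_one (measurable_prodMk_left hC)]
    congr 1
  simp_rw [h1]
  exact Measurable.lintegral_prod_right ((measurable_indicator_const_iff 1).mpr hC)

lemma measurable_chordVolume (hSopen : IsOpen S) :
    Measurable fun p : EuclideanSpace ℝ (Fin n) × EuclideanSpace ℝ (Fin n) =>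
      volume (chordInterval n S p.1 p.2) := by
  have : ∀ p : EuclideanSpace ℝ (Fin n) × EuclideanSpace ℝ (Fin n),
      chordInterval n S p.1 p.2 = {t : ℝ | (p, t) ∈ chordSet n S} := fun p =>
    chordInterval_eq_slice p.1 p.2
  simp_rw [this]
  exact measurable_slice_volume (isOpen_chordSet hSopen).measurableSet

lemma measurable_smul_line (u θ : EuclideanSpace ℝ (Fin n)) :
    Measurable fun t : ℝ => u + t • θ :=
  (measurable_id.smul_const θ).const_add u

lemma measurable_chordHit (hSopen : IsOpen S) {s : Set (EuclideanSpace ℝ (Fin n))}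
    (hs : MeasurableSet s) :
    Measurable fun p : EuclideanSpace ℝ (Fin n) × EuclideanSpace ℝ (Fin n) =>
      volume ({t : ℝ | p.1 + t • p.2 ∈ s} ∩ chordInterval n S p.1 p.2) := by
  set C : Set ((EuclideanSpace ℝ (Fin n) × EuclideanSpace ℝ (Fin n)) × ℝ) :=
    {q | q.1.1 + q.2 • q.1.2 ∈ s} ∩ chordSet n S with hC
  have hCm : MeasurableSet C := by
    apply MeasurableSet.inter
    · have hc : Measurable fun q : (EuclideanSpace ℝ (Fin n) × EuclideanSpace ℝ (Fin n)) × ℝ =>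
          q.1.1 + q.2 • q.1.2 := by fun_prop
      exact hc hs
    · exact (isOpen_chordSet hSopen).measurableSet
  have : ∀ p : EuclideanSpace ℝ (Fin n) × EuclideanSpace ℝ (Fin n),
      {t : ℝ | p.1 + t • p.2 ∈ s} ∩ chordInterval n S p.1 p.2 = {t : ℝ | (p, t) ∈ C} := by
    intro p
    rw [chordInterval_eq_slice]
    rfl
  simp_rw [this]
  exact measurable_slice_volume hCm

lemma kernel_apply (hSopen : IsOpen S) {s : Set (EuclideanSpace ℝ (Fin n))}
    (hs : MeasurableSet s) (u θ : EuclideanSpace ℝ (Fin n)) :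
    (Measure.map (fun t : ℝ => u + t • θ)
      ((volume (chordInterval n S u θ))⁻¹ • volume.restrict (chordInterval n S u θ))) s
    = (volume (chordInterval n S u θ))⁻¹ *
        volume ({t : ℝ | u + t • θ ∈ s} ∩ chordInterval n S u θ) := by
  rw [Measure.map_apply (measurable_smul_line u θ) hs, Measure.smul_apply, smul_eq_mul,
    Measure.restrict_apply ((measurable_smul_line u θ) hs)]
  rfl

lemma measurable_kernel (hSopen : IsOpen S) (u : EuclideanSpace ℝ (Fin n)) :
    Measurable fun θ : EuclideanSpace ℝ (Fin n) =>
      Measure.map (fun t : ℝ => u + t • θ)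
        ((volume (chordInterval n S u θ))⁻¹ • volume.restrict (chordInterval n S u θ)) := by
  apply Measure.measurable_measure.mpr
  intro s hs
  simp_rw [kernel_apply hSopen hs u]
  exact Measurable.mul
    (((measurable_chordVolume hSopen).comp measurable_prodMk_left).inv)
    ((measurable_chordHit hSopen hs).comp measurable_prodMk_left)

lemma measurable_radialNorm :
    Measurable fun x : EuclideanSpace ℝ (Fin n) => ‖x‖⁻¹ • x :=
  (measurable_norm.inv).smul measurable_id

lemma sphereUniform_univ : sphereUniform n Set.univ = 1 := by
  rw [sphereUniform, Measure.map_apply measurable_radialNorm MeasurableSet.univ,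
    Set.preimage_univ, Measure.smul_apply, smul_eq_mul,
    Measure.restrict_apply MeasurableSet.univ, Set.univ_inter]
  exact ENNReal.inv_mul_cancel (Metric.measure_ball_pos volume 0 one_pos).ne'
    measure_ball_lt_top.ne

lemma sphereUniform_zero (hn : 1 ≤ n) : sphereUniform n {0} = 0 := by
  haveI : Nontrivial (EuclideanSpace ℝ (Fin n)) := by
    apply Module.nontrivial_of_finrank_pos (R := ℝ)
    rw [finrank_euclideanSpace_fin]
    exact hn
  rw [sphereUniform, Measure.map_apply measurable_radialNorm (measurableSet_singleton 0)]
  have hpre : (fun x : EuclideanSpace ℝ (Fin n) => ‖x‖⁻¹ • x) ⁻¹' {0} = {0} := by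
    ext x
    simp only [Set.mem_preimage, Set.mem_singleton_iff, smul_eq_zero, inv_eq_zero, norm_eq_zero]
    tauto
  rw [hpre, Measure.smul_apply, smul_eq_mul,
    Measure.restrict_apply (measurableSet_singleton 0)]
  rw [show volume ({(0 : EuclideanSpace ℝ (Fin n))} ∩ Metric.ball 0 1) = 0 from
    measure_mono_null Set.inter_subset_left (measure_singleton 0)]
  rw [mul_zero]

lemma chordInterval_empty {u θ : EuclideanSpace ℝ (Fin n)} (hu : u ∉ S) :
    chordInterval n S u θ = ∅ := by
  rw [chordInterval]
  apply Set.not_nonempty_iff_eq_empty.mp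
  rw [connectedComponentIn_nonempty_iff]
  simpa using hu

lemma chordVolume_pos (hSopen : IsOpen S) {u : EuclideanSpace ℝ (Fin n)}
    (θ : EuclideanSpace ℝ (Fin n)) (hu : u ∈ S) :
    0 < volume (chordInterval n S u θ) := by
  have hUopen : IsOpen {t : ℝ | u + t • θ ∈ S} :=
    hSopen.preimage (by fun_prop)
  have hJopen : IsOpen (chordInterval n S u θ) := hUopen.connectedComponentIn
  apply hJopen.measure_pos volume
  rw [chordInterval, connectedComponentIn_nonempty_iff]
  simpa using hu

lemma chordVolume_lt_top (hSbdd : Bornology.IsBounded S) {u θ : EuclideanSpace ℝ (Fin n)}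
    (hθ : θ ≠ 0) : volume (chordInterval n S u θ) < ⊤ := by
  obtain ⟨R, hR⟩ := hSbdd.subset_ball 0
  have hsub : chordInterval n S u θ ⊆ Metric.closedBall (0:ℝ) ((R + ‖u‖) / ‖θ‖) := by
    intro t ht
    have htS : u + t • θ ∈ S := by
      have := (mem_chordInterval_iff.mp ht) t Set.right_mem_uIcc
      exact this
    have hnorm : ‖u + t • θ‖ < R := by
      have := hR htS
      simpa [Metric.mem_ball] using this
    have hθpos : 0 < ‖θ‖ := norm_pos_iff.mpr hθ
    rw [Metric.mem_closedBall, Real.dist_eq, sub_zero]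
    rw [le_div_iff₀ hθpos]
    have h1 : ‖t • θ‖ ≤ ‖u + t • θ‖ + ‖u‖ := by
      have := norm_sub_le (u + t • θ) u
      simpa [add_sub_cancel_left] using this
    rw [norm_smul, Real.norm_eq_abs] at h1
    linarith
  calc volume (chordInterval n S u θ) ≤ volume (Metric.closedBall (0:ℝ) ((R + ‖u‖) / ‖θ‖)) :=
        measure_mono hsub
    _ < ⊤ := measure_closedBall_lt_top

private lemma shift_uIcc {a b w c : ℝ} (h : w ∈ Set.uIcc a b) :
    w + c ∈ Set.uIcc (a + c) (b + c) := by
  rcases Set.mem_uIcc.mp h with ⟨h1, h2⟩ | ⟨h1, h2⟩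
  · exact Set.mem_uIcc.mpr (Or.inl ⟨by linarith, by linarith⟩)
  · exact Set.mem_uIcc.mpr (Or.inr ⟨by linarith, by linarith⟩)

lemma chord_flip {v θ : EuclideanSpace ℝ (Fin n)} {t : ℝ} :
    t ∈ chordInterval n S (v - t • θ) θ ↔ -t ∈ chordInterval n S v θ := by
  rw [mem_chordInterval_iff, mem_chordInterval_iff]
  constructor
  · intro h s hs
    have hs' : s + t ∈ Set.uIcc (0 + t) (-t + t) := shift_uIcc hs
    rw [zero_add, neg_add_cancel, Set.uIcc_comm] at hs'
    have := h (s + t) hs'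
    have heq : v - t • θ + (s + t) • θ = v + s • θ := by module
    rwa [heq] at this
  · intro h s hs
    have hs' : s + -t ∈ Set.uIcc (0 + -t) (t + -t) := shift_uIcc hs
    rw [zero_add, add_neg_cancel, Set.uIcc_comm] at hs'
    have := h (s + -t) hs'
    have heq : v + (s + -t) • θ = v - t • θ + s • θ := by module
    rwa [heq] at this

lemma chord_translate {v θ : EuclideanSpace ℝ (Fin n)} {t : ℝ}
    (hmem : -t ∈ chordInterval n S v θ) :
    chordInterval n S (v - t • θ) θ = (fun r : ℝ => r + -t) ⁻¹' chordInterval n S v θ := by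
  have hU := mem_chordInterval_iff.mp hmem
  ext r
  simp only [Set.mem_preimage]
  rw [mem_chordInterval_iff, mem_chordInterval_iff]
  constructor
  · intro h1 w hw
    rcases Set.uIcc_subset_uIcc_union_uIcc (b := -t) hw with hcase | hcase
    · exact hU w hcase
    · have hw' : w + t ∈ Set.uIcc (-t + t) (r + -t + t) := shift_uIcc hcase
      rw [neg_add_cancel] at hw'
      have hw'' : w + t ∈ Set.uIcc 0 r := by
        convert hw' using 2
        ring
      have := h1 (w + t) hw''
      have heq : v - t • θ + (w + t) • θ = v + w • θ := by module
      rwa [heq] at this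
  · intro h2 s hs
    have hst : s + -t ∈ Set.uIcc (0 + -t) (r + -t) := shift_uIcc hs
    rw [zero_add] at hst
    rcases Set.uIcc_subset_uIcc_union_uIcc (b := (0:ℝ)) hst with hcase | hcase
    · rw [Set.uIcc_comm] at hcase
      have := hU _ hcase
      have heq : v + (s + -t) • θ = v - t • θ + s • θ := by module
      rwa [heq] at this
    · have := h2 _ hcase
      have heq : v + (s + -t) • θ = v - t • θ + s • θ := by module
      rwa [heq] at this

lemma chordVolume_translate {v θ : EuclideanSpace ℝ (Fin n)} {t : ℝ}
    (hmem : -t ∈ chordInterval n S v θ) :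
    volume (chordInterval n S (v - t • θ) θ) = volume (chordInterval n S v θ) := by
  rw [chord_translate hmem]
  exact measure_preimage_add_right volume (-t) _

lemma inner_integral (hSopen : IsOpen S) (hSbdd : Bornology.IsBounded S)
    {A : Set (EuclideanSpace ℝ (Fin n))} (hAm : MeasurableSet A) (hAS : A ⊆ S)
    {θ : EuclideanSpace ℝ (Fin n)} (hθ : θ ≠ 0) :
    ∫⁻ u in S, (volume (chordInterval n S u θ))⁻¹ *
      volume ({t : ℝ | u + t • θ ∈ A} ∩ chordInterval n S u θ) ∂volume = volume A := by
  classical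
  let E := EuclideanSpace ℝ (Fin n)
  set V : EuclideanSpace ℝ (Fin n) → ENNReal := fun u => volume (chordInterval n S u θ) with hV
  set G : EuclideanSpace ℝ (Fin n) → ENNReal := fun u =>
    (V u)⁻¹ * volume ({t : ℝ | u + t • θ ∈ A} ∩ chordInterval n S u θ) with hG
  set Φ : EuclideanSpace ℝ (Fin n) × ℝ → ENNReal := fun p =>
    (V p.1)⁻¹ * ((chordSet n S).indicator 1 ((p.1, θ), p.2) *
      A.indicator 1 (p.1 + p.2 • θ)) with hΦ
  have hCm : MeasurableSet (chordSet n S) := (isOpen_chordSet hSopen).measurableSet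
  have hVm : Measurable V :=
    (measurable_chordVolume hSopen).comp (measurable_id.prodMk measurable_const)
  have hΦm : Measurable Φ := by
    apply Measurable.mul
    · exact (hVm.comp measurable_fst).inv
    · apply Measurable.mul
      · exact ((measurable_indicator_const_iff 1).mpr hCm).comp
          (((measurable_fst.prodMk measurable_const).prodMk measurable_snd))
      · exact ((measurable_indicator_const_iff 1).mpr hAm).comp
          (measurable_fst.add (measurable_snd.smul_const θ))
  -- step a : extend from S to the whole space
  have stepa : ∫⁻ u in S, G u ∂volume = ∫⁻ u, G u ∂volume := by
    rw [← lintegral_indicator hSopen.measurableSet]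
    apply lintegral_congr
    intro u
    by_cases hu : u ∈ S
    · rw [Set.indicator_of_mem hu]
    · rw [Set.indicator_of_notMem hu, hG]
      simp only [chordInterval_empty hu, Set.inter_empty, measure_empty, mul_zero]
  -- step b : G u as a t-integral
  have stepb : ∀ u : EuclideanSpace ℝ (Fin n), G u = ∫⁻ t, Φ (u, t) ∂volume := by
    intro u
    have hmeas : MeasurableSet ({t : ℝ | u + t • θ ∈ A} ∩ chordInterval n S u θ) :=
      ((measurable_smul_line u θ) hAm).inter (measurableSet_chordInterval hSopen u θ)
    have h1 : volume ({t : ℝ | u + t • θ ∈ A} ∩ chordInterval n S u θ)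
        = ∫⁻ t, (chordSet n S).indicator 1 ((u, θ), t) * A.indicator 1 (u + t • θ) ∂volume := by
      rw [← lintegral_indicator_one hmeas]
      apply lintegral_congr
      intro t
      by_cases h2 : t ∈ chordInterval n S u θ <;> by_cases h3 : u + t • θ ∈ A <;>
        simp [Set.indicator_apply, h2, h3, mem_chordSet_iff, Set.mem_setOf_eq]
    rw [hG]
    simp only
    rw [h1, ← lintegral_const_mul _ (by
      exact (((measurable_indicator_const_iff 1).mpr hCm).comp
          ((measurable_const.prodMk measurable_const).prodMk measurable_id)).mul
        (((measurable_indicator_const_iff 1).mpr hAm).comp (measurable_smul_line u θ)))]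
  -- the flipped integrand
  set Ψ : EuclideanSpace ℝ (Fin n) → ℝ → ENNReal := fun v t =>
    A.indicator 1 v * ((V v)⁻¹ * (chordSet n S).indicator 1 ((v, θ), -t)) with hΨ
  have hΨm : Measurable fun z : ℝ × EuclideanSpace ℝ (Fin n) => Ψ z.2 z.1 := by
    apply Measurable.mul
    · exact ((measurable_indicator_const_iff 1).mpr hAm).comp measurable_snd
    · apply Measurable.mul
      · exact (hVm.comp measurable_snd).inv
      · exact ((measurable_indicator_const_iff 1).mpr hCm).comp
          ((measurable_snd.prodMk measurable_const).prodMk measurable_fst.neg)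
  have flipΦ : ∀ (v : EuclideanSpace ℝ (Fin n)) (t : ℝ), Φ (v - t • θ, t) = Ψ v t := by
    intro v t
    have hpt : (v - t • θ) + t • θ = v := sub_add_cancel v (t • θ)
    by_cases hm : t ∈ chordInterval n S (v - t • θ) θ
    · have hm' : -t ∈ chordInterval n S v θ := chord_flip.mp hm
      rw [hΦ, hΨ]
      simp only
      rw [Set.indicator_of_mem (mem_chordSet_iff.mpr hm) (1 : ((EuclideanSpace ℝ (Fin n) × EuclideanSpace ℝ (Fin n)) × ℝ) → ENNReal),
        Set.indicator_of_mem (mem_chordSet_iff.mpr hm') (1 : ((EuclideanSpace ℝ (Fin n) × EuclideanSpace ℝ (Fin n)) × ℝ) → ENNReal), hpt]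
      have hVeq : V (v - t • θ) = V v := chordVolume_translate hm'
      rw [hVeq]
      simp only [Pi.one_apply, one_mul, mul_one]
      ring
    · have hm' : -t ∉ chordInterval n S v θ := fun h => hm (chord_flip.mpr h)
      rw [hΦ, hΨ]
      simp only
      rw [Set.indicator_of_notMem (fun h => hm (mem_chordSet_iff.mp h)) (1 : ((EuclideanSpace ℝ (Fin n) × EuclideanSpace ℝ (Fin n)) × ℝ) → ENNReal),
        Set.indicator_of_notMem (fun h => hm' (mem_chordSet_iff.mp h)) (1 : ((EuclideanSpace ℝ (Fin n) × EuclideanSpace ℝ (Fin n)) × ℝ) → ENNReal)]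
      simp
  calc ∫⁻ u in S, G u ∂volume
      = ∫⁻ u, G u ∂volume := stepa
    _ = ∫⁻ u, ∫⁻ t, Φ (u, t) ∂volume ∂volume := lintegral_congr stepb
    _ = ∫⁻ t, ∫⁻ u, Φ (u, t) ∂volume ∂volume :=
        lintegral_lintegral_swap hΦm.aemeasurable
    _ = ∫⁻ t, ∫⁻ v, Φ (v - t • θ, t) ∂volume ∂volume := by
        apply lintegral_congr
        intro t
        have h := lintegral_add_right_eq_self (μ := volume) (fun v => Φ (v, t)) (-(t • θ))
        rw [← h]
        apply lintegral_congr
        intro v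
        rw [sub_eq_add_neg]
    _ = ∫⁻ t, ∫⁻ v, Ψ v t ∂volume ∂volume := by
        apply lintegral_congr
        intro t
        apply lintegral_congr
        intro v
        exact flipΦ v t
    _ = ∫⁻ v, ∫⁻ t, Ψ v t ∂volume ∂volume := lintegral_lintegral_swap hΨm.aemeasurable
    _ = ∫⁻ v, A.indicator 1 v * ((V v)⁻¹ * V v) ∂volume := by
        apply lintegral_congr
        intro v
        have hgm : Measurable fun t : ℝ =>
            (chordSet n S).indicator (1 : ((EuclideanSpace ℝ (Fin n) × EuclideanSpace ℝ (Fin n)) × ℝ) → ENNReal) ((v, θ), -t) :=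
          ((measurable_indicator_const_iff 1).mpr hCm).comp
            ((measurable_const.prodMk measurable_const).prodMk measurable_id.neg)
        have h1 : ∀ t : ℝ, Ψ v t
            = (A.indicator 1 v * (V v)⁻¹) * (chordSet n S).indicator 1 ((v, θ), -t) := by
          intro t; rw [hΨ]; ring
        simp_rw [h1]
        rw [lintegral_const_mul _ hgm]
        have h2 : ∀ t : ℝ, (chordSet n S).indicator (1 : ((EuclideanSpace ℝ (Fin n) × EuclideanSpace ℝ (Fin n)) × ℝ) → ENNReal) ((v, θ), -t)
            = (chordInterval n S v θ).indicator 1 (-t) := by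
          intro t
          by_cases hm : -t ∈ chordInterval n S v θ
          · rw [Set.indicator_of_mem (mem_chordSet_iff.mpr hm),
              Set.indicator_of_mem hm]
            rfl
          · rw [Set.indicator_of_notMem (fun h => hm (mem_chordSet_iff.mp h)),
              Set.indicator_of_notMem hm]
        simp_rw [h2]
        have h3 : ∫⁻ t : ℝ, (chordInterval n S v θ).indicator 1 (-t) ∂volume
            = ∫⁻ t : ℝ, (chordInterval n S v θ).indicator 1 t ∂volume :=
          (Measure.measurePreserving_neg volume).lintegral_comp
            ((measurable_indicator_const_iff 1).mpr (measurableSet_chordInterval hSopen v θ))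
        rw [h3, lintegral_indicator_one (measurableSet_chordInterval hSopen v θ)]
        ring
    _ = ∫⁻ v, A.indicator 1 v ∂volume := by
        apply lintegral_congr
        intro v
        by_cases hv : v ∈ A
        · rw [ENNReal.inv_mul_cancel (chordVolume_pos hSopen θ (hAS hv)).ne'
            (chordVolume_lt_top hSbdd hθ).ne, mul_one]
        · rw [Set.indicator_of_notMem hv, zero_mul]
    _ = volume A := lintegral_indicator_one hAm


end HitAndRunProof

/-- stationarity of the uniform distribution for Hit-and-Run, Smith
1984: for every measurable `A ⊆ S`, `∫_S P_u(A) du = vol(A)`. -/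

theorem stmt_14 (n : ℕ) (hn : 1 ≤ n) (S : Set (EuclideanSpace ℝ (Fin n)))
    (hSne : S.Nonempty) (hSopen : IsOpen S) (hSbdd : Bornology.IsBounded S)
    (hSconn : IsConnected S)
    (A : Set (EuclideanSpace ℝ (Fin n))) (hAm : MeasurableSet A) (hAS : A ⊆ S) :
    ∫⁻ u in S, hitAndRunStep n S u A = volume A := by
  haveI : IsFiniteMeasure (sphereUniform n) :=
    ⟨by rw [sphereUniform_univ]; exact ENNReal.one_lt_top⟩
  have step1 : ∫⁻ u in S, hitAndRunStep n S u A ∂volume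
      = ∫⁻ u in S, ∫⁻ θ, (volume (chordInterval n S u θ))⁻¹ *
          volume ({t : ℝ | u + t • θ ∈ A} ∩ chordInterval n S u θ)
            ∂(sphereUniform n) ∂volume := by
    apply lintegral_congr
    intro u
    rw [hitAndRunStep, Measure.bind_apply hAm (measurable_kernel hSopen u).aemeasurable]
    exact lintegral_congr fun θ => kernel_apply hSopen hAm u θ
  have hjm : Measurable fun z : EuclideanSpace ℝ (Fin n) × EuclideanSpace ℝ (Fin n) =>
      (volume (chordInterval n S z.1 z.2))⁻¹ *
        volume ({t : ℝ | z.1 + t • z.2 ∈ A} ∩ chordInterval n S z.1 z.2) :=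
    ((measurable_chordVolume hSopen).inv).mul (measurable_chordHit hSopen hAm)
  rw [step1, lintegral_lintegral_swap hjm.aemeasurable]
  have hae : ∀ᵐ θ ∂(sphereUniform n),
      (∫⁻ u in S, (volume (chordInterval n S u θ))⁻¹ *
        volume ({t : ℝ | u + t • θ ∈ A} ∩ chordInterval n S u θ) ∂volume) = volume A := by
    rw [ae_iff]
    apply measure_mono_null ?_ (sphereUniform_zero hn)
    intro θ hθ
    simp only [Set.mem_setOf_eq] at hθ
    simp only [Set.mem_singleton_iff]
    by_contra hθ0
    exact hθ (inner_integral hSopen hSbdd hAm hAS hθ0)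
  rw [lintegral_congr_ae hae, lintegral_const, sphereUniform_univ, mul_one]
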